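/- Let p be a positive integer, γ > 0, let g, h : ℝ^p → ℝ be convex, and let f : ℝ^p → ℝ be differentiable with gradient ∇f. Let y ∈ ℝ^p, let (x, z) be a three-operator splitting step from y, set y⁺ = y − x + z, and let (x⁺, z⁺) be a three-operator splitting step from y⁺. With G(y) = (x − z)/γ and G(y⁺) = (x⁺ − z⁺)/γ, it holds that ‖G(y⁺)‖² ≤ ‖G(y)‖² − ‖G(y⁺) − G(y)‖² − (2/γ)·⟨∇f(x) − ∇f(x⁺), z − z⁺⟩. -/

import Mathlib

open RealInnerProductSpace

/-- `x` is a proximal point of `φ` at `y` with parameter `γ`: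
it minimizes `u ↦ φ u + (1/(2γ)) ‖u - y‖²`. -/
def IsProxPt {p : ℕ} (γ : ℝ) (φ : EuclideanSpace ℝ (Fin p) → ℝ)
    (y x : EuclideanSpace ℝ (Fin p)) : Prop :=
  ∀ u : EuclideanSpace ℝ (Fin p),
    φ x + (1 / (2 * γ)) * ‖x - y‖ ^ 2 ≤ φ u + (1 / (2 * γ)) * ‖u - y‖ ^ 2

/-- `(x, z)` is a three-operator splitting step from `y`. -/
def IsSplitStep {p : ℕ} (γ : ℝ) (g h f : EuclideanSpace ℝ (Fin p) → ℝ)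
    (y x z : EuclideanSpace ℝ (Fin p)) : Prop :=
  IsProxPt γ g y x ∧ IsProxPt γ h ((2 : ℝ) • x - y - γ • gradient f x) z

/-- `f` is `L`-smooth: differentiable with `L`-Lipschitz gradient. -/
def LSmooth {p : ℕ} (L : ℝ) (f : EuclideanSpace ℝ (Fin p) → ℝ) : Prop :=
  Differentiable ℝ f ∧ ∀ a b : EuclideanSpace ℝ (Fin p),
    ‖gradient f a - gradient f b‖ ≤ L * ‖a - b‖

/-- `u` is a subgradient of `φ` at `x`. -/
def IsSubgradient {p : ℕ} (φ : EuclideanSpace ℝ (Fin p) → ℝ)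
    (x u : EuclideanSpace ℝ (Fin p)) : Prop :=
  ∀ w : EuclideanSpace ℝ (Fin p), φ w ≥ φ x + ⟪u, w - x⟫

lemma prox_subgradient {p : ℕ} {γ : ℝ} (hγ : 0 < γ)
    {φ : EuclideanSpace ℝ (Fin p) → ℝ} (hφ : ConvexOn ℝ Set.univ φ)
    {y x : EuclideanSpace ℝ (Fin p)} (hx : IsProxPt γ φ y x) :
    IsSubgradient φ x (γ⁻¹ • (y - x)) := by
  intro w
  rw [ge_iff_le]
  apply le_of_forall_pos_le_add
  intro ε hε
  by_cases hwx : w = x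
  · simp [hwx, inner_smul_left]
    nlinarith
  have hN : 0 < ‖w - x‖ ^ 2 := by
    have h0 : w - x ≠ 0 := sub_ne_zero.mpr hwx
    exact pow_pos (norm_pos_iff.mpr h0) 2
  set t : ℝ := min 1 (ε * (2 * γ) / ‖w - x‖ ^ 2) with ht
  have ht0 : 0 < t := lt_min one_pos (div_pos (by positivity) hN)
  have ht1 : t ≤ 1 := min_le_left _ _
  have htε : t * ‖w - x‖ ^ 2 / (2 * γ) ≤ ε := by
    have h2 : t ≤ ε * (2 * γ) / ‖w - x‖ ^ 2 := min_le_right _ _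
    rw [div_le_iff₀ (by positivity)]
    calc t * ‖w - x‖ ^ 2 ≤ (ε * (2 * γ) / ‖w - x‖ ^ 2) * ‖w - x‖ ^ 2 := by nlinarith
    _ = ε * (2 * γ) := by
      field_simp
      exact div_self (norm_pos_iff.mpr (sub_ne_zero.mpr hwx)).ne'
  -- convexity
  have hc := hφ.2 (Set.mem_univ x) (Set.mem_univ w)
    (show (0:ℝ) ≤ 1 - t by linarith) ht0.le (by ring)
  simp only [smul_eq_mul] at hc
  have hcomb : (1 - t) • x + t • w = x + t • (w - x) := by module
  rw [hcomb] at hc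
  have hprox := hx (x + t • (w - x))
  have hnorm : ‖x + t • (w - x) - y‖ ^ 2
      = ‖x - y‖ ^ 2 + 2 * (t * ⟪x - y, w - x⟫) + t ^ 2 * ‖w - x‖ ^ 2 := by
    have h : x + t • (w - x) - y = (x - y) + t • (w - x) := by abel
    rw [h, norm_add_sq_real, real_inner_smul_right, norm_smul, Real.norm_eq_abs,
      abs_of_nonneg ht0.le]
    ring
  rw [hnorm] at hprox
  have hkey : φ x ≤ φ w + γ⁻¹ * ⟪x - y, w - x⟫ + t * ‖w - x‖ ^ 2 / (2 * γ) := by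
    have hg : (1 / (2 * γ)) * (2 * (t * ⟪x - y, w - x⟫) + t ^ 2 * ‖w - x‖ ^ 2)
        = t * (γ⁻¹ * ⟪x - y, w - x⟫) + t * (t * ‖w - x‖ ^ 2 / (2 * γ)) := by
      field_simp
    have h1 : t * φ x ≤ t * (φ w + γ⁻¹ * ⟪x - y, w - x⟫ + t * ‖w - x‖ ^ 2 / (2 * γ)) := by
      nlinarith [hprox, hc, hg]
    exact le_of_mul_le_mul_left h1 ht0
  have hinner : ⟪γ⁻¹ • (y - x), w - x⟫ = -(γ⁻¹ * ⟪x - y, w - x⟫) := by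
    rw [real_inner_smul_left]
    have : ⟪y - x, w - x⟫ = -⟪x - y, w - x⟫ := by
      rw [← inner_neg_left]; congr 1; abel
    rw [this]; ring
  rw [hinner]
  linarith

lemma subgrad_mono {p : ℕ} {φ : EuclideanSpace ℝ (Fin p) → ℝ}
    {x x' u u' : EuclideanSpace ℝ (Fin p)}
    (h : IsSubgradient φ x u) (h' : IsSubgradient φ x' u') :
    (0:ℝ) ≤ ⟪u - u', x - x'⟫ := by
  have h1 := h x'
  have h2 := h' x
  have hc : ⟪u', x - x'⟫ = -⟪u', x' - x⟫ := by
    rw [← inner_neg_right]; congr 1; abel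
  have hc2 : ⟪u, x - x'⟫ = -⟪u, x' - x⟫ := by
    rw [← inner_neg_right]; congr 1; abel
  rw [inner_sub_left, hc, hc2]
  linarith

lemma key_ineq {E : Type*} [NormedAddCommGroup E] [InnerProductSpace ℝ E]
    (Q A B D : E)
    (h1 : (0:ℝ) ≤ ⟪Q - A, A⟫)
    (h2 : (0:ℝ) ≤ ⟪A + A - Q - D - B, B⟫) :
    ⟪Q - A + B, Q - A + B⟫ + ⟪(Q - A + B) - Q, (Q - A + B) - Q⟫
      - ⟪Q, Q⟫ + 2 * ⟪D, B⟫ ≤ 0 := by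
  simp only [inner_sub_left, inner_sub_right, inner_add_left, inner_add_right] at h1 h2 ⊢
  linarith [real_inner_comm Q A, real_inner_comm Q B, real_inner_comm A B,
    real_inner_comm D B, real_inner_comm Q D, real_inner_comm A D]

/-- one-step inequality for the gradient mapping. -/
theorem stmt_10 (p : ℕ) (hp : 0 < p) (γ : ℝ) (hγ : 0 < γ)
    (g h f : EuclideanSpace ℝ (Fin p) → ℝ)
    (hg : ConvexOn ℝ Set.univ g) (hh : ConvexOn ℝ Set.univ h)
    (hf : Differentiable ℝ f)
    (y x z yplus xplus zplus : EuclideanSpace ℝ (Fin p))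
    (hstep : IsSplitStep γ g h f y x z)
    (hyplus : yplus = y - x + z)
    (hstepplus : IsSplitStep γ g h f yplus xplus zplus) :
    ‖γ⁻¹ • (xplus - zplus)‖ ^ 2 ≤
      ‖γ⁻¹ • (x - z)‖ ^ 2 - ‖γ⁻¹ • (xplus - zplus) - γ⁻¹ • (x - z)‖ ^ 2 -
        (2 / γ) * ⟪gradient f x - gradient f xplus, z - zplus⟫ := by
  subst hyplus
  have hinv : (0:ℝ) < γ⁻¹ := by positivity
  -- subgradients
  have sg1 := prox_subgradient hγ hg hstep.1
  have sg1' := prox_subgradient hγ hg hstepplus.1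
  have sg2 := prox_subgradient hγ hh hstep.2
  have sg2' := prox_subgradient hγ hh hstepplus.2
  -- monotonicity, scaled
  have m1 := subgrad_mono sg1 sg1'
  have m2 := subgrad_mono sg2 sg2'
  rw [← smul_sub, real_inner_smul_left] at m1 m2
  have H1 : (0:ℝ) ≤ ⟪(x - z) - (x - xplus), x - xplus⟫ := by
    have e : (y - x) - ((y - x + z) - xplus) = (x - z) - (x - xplus) := by abel
    rw [e] at m1
    exact nonneg_of_mul_nonneg_right m1 hinv
  have H2 : (0:ℝ) ≤ ⟪(x - xplus) + (x - xplus) - (x - z)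
      - γ • (gradient f x - gradient f xplus) - (z - zplus), z - zplus⟫ := by
    have e : ((2:ℝ) • x - y - γ • gradient f x - z)
        - ((2:ℝ) • xplus - (y - x + z) - γ • gradient f xplus - zplus)
        = (x - xplus) + (x - xplus) - (x - z)
          - γ • (gradient f x - gradient f xplus) - (z - zplus) := by module
    rw [e] at m2
    exact nonneg_of_mul_nonneg_right m2 hinv
  have key := key_ineq (x - z) (x - xplus) (z - zplus)
    (γ • (gradient f x - gradient f xplus)) H1 H2
  have eP : (x - z) - (x - xplus) + (z - zplus) = xplus - zplus := by abel
  rw [eP, real_inner_smul_left] at key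
  -- convert goal norms
  rw [← smul_sub]
  rw [norm_smul, norm_smul, norm_smul, Real.norm_eq_abs, abs_of_pos hinv]
  simp only [mul_pow]
  rw [show ((xplus - zplus) - (x - z)) = ((xplus - zplus) - (x - z)) from rfl]
  have k2 : ‖xplus - zplus‖ ^ 2 + ‖xplus - zplus - (x - z)‖ ^ 2 - ‖x - z‖ ^ 2
      + 2 * (γ * ⟪gradient f x - gradient f xplus, z - zplus⟫) ≤ 0 := by
    rw [real_inner_self_eq_norm_sq, real_inner_self_eq_norm_sq,
      real_inner_self_eq_norm_sq] at key
    exact key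
  have hγ2 : γ⁻¹ ^ 2 * (2 * γ) = 2 / γ := by
    field_simp
  nlinarith [mul_le_mul_of_nonneg_left k2 (le_of_lt (show (0:ℝ) < γ⁻¹ ^ 2 by positivity))]
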